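/- Let k be an algebraically closed field and consider the polynomial ring in 18 variables a₀,a₁,a₂, b₀,b₁,b₂, …, f₀,f₁,f₂. Let φ be the determinant of the 6×6 matrix whose column corresponding to each letter x ∈ {a,b,c,d,e,f} is (x₀², x₁², x₂², x₀x₁, x₀x₂, x₁x₂). Then φ is not the square of any polynomial, i.e., there is no polynomial p with φ = p². -/

import Mathlib

/-- The Veronese image of a vector `v = (v₀, v₁, v₂)`:
`ver v = (v₀², v₁², v₂², v₀v₁, v₀v₂, v₁v₂)`. -/
def ver {k : Type*} [CommRing k] (v : Fin 3 → k) : Fin 6 → k :=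
  ![v 0 * v 0, v 1 * v 1, v 2 * v 2, v 0 * v 1, v 0 * v 2, v 1 * v 2]

set_option maxHeartbeats 4000000 in
/-- In the polynomial ring over `k` in the 18 variables `x_{c,j}` (`c ∈ {a,…,f}`,
`j ∈ {0,1,2}`), the determinant `φ` of the 6×6 matrix whose column indexed by `c` is
`(x_{c,0}², x_{c,1}², x_{c,2}², x_{c,0}x_{c,1}, x_{c,0}x_{c,2}, x_{c,1}x_{c,2})`
is not the square of any polynomial. -/
theorem phi_not_square {k : Type*} [Field k] [IsAlgClosed k] :
    ¬ ∃ p : MvPolynomial (Fin 6 × Fin 3) k,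
      Matrix.det (Matrix.of fun r c =>
        ver (fun j => MvPolynomial.X (c, j)) r) = p ^ 2 := by
  rintro ⟨p, hp⟩
  set g : Fin 6 × Fin 3 → Polynomial k := fun ij =>
    ![![1,0,0],![0,1,0],![0,0,1],![1,1,0],![1,0,1],![0,1,Polynomial.X]] ij.1 ij.2 with hg
  have h := congrArg (MvPolynomial.aeval g) hp
  rw [map_pow] at h
  have hdet : (MvPolynomial.aeval g) (Matrix.det (Matrix.of fun r c =>
      ver (fun j => (MvPolynomial.X (c, j) : MvPolynomial (Fin 6 × Fin 3) k)) r)) = Polynomial.X := by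
    rw [AlgHom.map_det, AlgHom.mapMatrix_apply]
    have : ((Matrix.of fun r c => ver (fun j => (MvPolynomial.X (c, j) : MvPolynomial (Fin 6 × Fin 3) k)) r).map
        (MvPolynomial.aeval g)) = Matrix.of fun r c => ver (fun j => g (c, j)) r := by
      apply Matrix.ext
      intro r c
      simp only [Matrix.map_apply, Matrix.of_apply, ver]
      fin_cases r <;> simp [map_mul, show (5:Fin 6) = (4:Fin 5).succ from rfl, Matrix.cons_val_succ]
    rw [this]
    simp only [hg]
    simp [Matrix.det_succ_row_zero, Fin.sum_univ_succ, ver, Matrix.submatrix, Fin.succAbove]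
  rw [hdet] at h
  have hq : MvPolynomial.aeval g p ≠ 0 := by
    intro h0
    rw [h0] at h
    simp at h
  have := congrArg Polynomial.natDegree h
  rw [Polynomial.natDegree_X, Polynomial.natDegree_pow] at this
  omega
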